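/- Let c ≤ d be real numbers, let j : [c,d] → ℝ be continuous, let a : [c,d] → ℝ satisfy |a(ζ)| ≤ κ for all ζ with some κ < 1, let b : [c,d] → ℝ satisfy c ≤ b(ζ) ≤ ζ for all ζ ∈ [c,d], and let k : [c,d]×[c,d] → ℝ be such that for each ζ the function z ↦ k(ζ,z) is measurable on [c,ζ] and |k(ζ,z)| ≤ K for some constant K. If for every ζ ∈ [c,d] one has j(ζ) − a(ζ)·j(b(ζ)) + ∫_c^ζ k(ζ,z)·j(z) dz = 0, then j(ζ) = 0 for all ζ ∈ [c,d]. -/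

import Mathlib

open Set intervalIntegral

/-- A homogeneous second-kind Volterra integral equation with an additional
delayed-argument term whose coefficient is bounded by `κ < 1` has only the
trivial continuous solution. -/
theorem homogeneous_delayed_volterra_trivial
    (c d : ℝ) (hcd : c ≤ d)
    (j : ℝ → ℝ) (hj : ContinuousOn j (Icc c d))
    (a : ℝ → ℝ) (κ : ℝ) (hκ : κ < 1) (ha : ∀ ζ ∈ Icc c d, |a ζ| ≤ κ)
    (b : ℝ → ℝ) (hb : ∀ ζ ∈ Icc c d, b ζ ∈ Icc c ζ)
    (k : ℝ → ℝ → ℝ) (K : ℝ)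
    (hkmeas : ∀ ζ ∈ Icc c d, Measurable fun z => k ζ z)
    (hkbd : ∀ ζ ∈ Icc c d, ∀ z ∈ Icc c ζ, |k ζ z| ≤ K)
    (heq : ∀ ζ ∈ Icc c d, j ζ - a ζ * j (b ζ) + (∫ z in c..ζ, k ζ z * j z) = 0) :
    ∀ ζ ∈ Icc c d, j ζ = 0 := by
  have hcmem : c ∈ Icc c d := ⟨le_refl c, hcd⟩
  have hK0 : 0 ≤ K := le_trans (abs_nonneg _) (hkbd c hcmem c ⟨le_refl c, le_refl c⟩)
  have hκ0 : 0 ≤ κ := le_trans (abs_nonneg _) (ha c hcmem)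
  have h1κ : 0 < 1 - κ := by linarith
  set lam : ℝ := K / (1 - κ) + 1 with hlam_def
  have hlam_pos : 0 < lam := by positivity
  have hfac : κ + K / lam < 1 := by
    have h : (1 - κ) * lam = K + (1 - κ) := by
      rw [hlam_def, mul_add, mul_one, mul_div_cancel₀ _ h1κ.ne']
    have : K / lam < 1 - κ := by
      rw [div_lt_iff₀ hlam_pos]; nlinarith
    linarith
  -- the weighted function
  set g : ℝ → ℝ := fun ζ => |j ζ| * Real.exp (-(lam * (ζ - c))) with hg_def
  have hgcont : ContinuousOn g (Icc c d) :=
    hj.abs.mul (Continuous.continuousOn (by fun_prop))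
  obtain ⟨ζ₀, hζ₀mem, hmax⟩ := isCompact_Icc.exists_isMaxOn ⟨c, hcmem⟩ hgcont
  set N : ℝ := g ζ₀ with hN_def
  have hN0 : 0 ≤ N := mul_nonneg (abs_nonneg _) (Real.exp_nonneg _)
  have hgle : ∀ ζ ∈ Icc c d, g ζ ≤ N := fun ζ hζ => hmax hζ
  -- pointwise bound |j z| ≤ N * exp (lam * (z - c)) on Icc c d
  have hjle : ∀ z ∈ Icc c d, |j z| ≤ N * Real.exp (lam * (z - c)) := by
    intro z hz
    have h := hgle z hz
    rw [hg_def] at h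
    have hexp : 0 < Real.exp (lam * (z - c)) := Real.exp_pos _
    calc |j z| = |j z| * Real.exp (-(lam * (z - c))) * Real.exp (lam * (z - c)) := by
          rw [mul_assoc, ← Real.exp_add]; simp
      _ ≤ N * Real.exp (lam * (z - c)) := mul_le_mul_of_nonneg_right h hexp.le
  -- key inequality at ζ₀
  have hc0 : c ≤ ζ₀ := hζ₀mem.1
  have hIcc_sub : Icc c ζ₀ ⊆ Icc c d := Icc_subset_Icc le_rfl hζ₀mem.2
  -- integrability of the integrand
  have hjm : MeasureTheory.AEStronglyMeasurable j (MeasureTheory.volume.restrict (Icc c ζ₀)) :=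
    (hj.mono hIcc_sub).aestronglyMeasurable measurableSet_Icc
  obtain ⟨B, hB⟩ : ∃ B, ∀ z ∈ Icc c ζ₀, |j z| ≤ B := by
    refine ⟨N * Real.exp (lam * (ζ₀ - c)), fun z hz => ?_⟩
    refine (hjle z (hIcc_sub hz)).trans ?_
    exact mul_le_mul_of_nonneg_left (Real.exp_le_exp.2 (by nlinarith [hz.2, hlam_pos])) hN0
  have hfint : IntervalIntegrable (fun z => k ζ₀ z * j z) MeasureTheory.volume c ζ₀ := by
    rw [intervalIntegrable_iff_integrableOn_Icc_of_le hc0]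
    refine ⟨((hkmeas ζ₀ hζ₀mem).aestronglyMeasurable.restrict).mul hjm, ?_⟩
    refine MeasureTheory.HasFiniteIntegral.restrict_of_bounded (C := K * B)
      (by simp [Real.volume_Icc]) ?_
    filter_upwards [MeasureTheory.ae_restrict_mem measurableSet_Icc] with z hz
    have h1 := hkbd ζ₀ hζ₀mem z hz
    have h2 := hB z hz
    have h3 := mul_le_mul h1 h2 (abs_nonneg _) hK0
    simpa [abs_mul] using h3
  -- the exponential integral
  have hexp_int : (∫ z in c..ζ₀, Real.exp (lam * (z - c))) =
      (Real.exp (lam * (ζ₀ - c)) - 1) / lam := by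
    have hF : ∀ x ∈ uIcc c ζ₀, HasDerivAt (fun x => Real.exp (lam * (x - c)) / lam)
        (Real.exp (lam * (x - c))) x := by
      intro x _
      have h1 : HasDerivAt (fun x : ℝ => lam * (x - c)) lam x := by
        simpa using ((hasDerivAt_id x).sub_const c).const_mul lam
      have h2 := (Real.hasDerivAt_exp (lam * (x - c))).comp x h1
      have h3 := h2.div_const lam
      simpa [mul_div_assoc, mul_div_cancel_right₀ _ hlam_pos.ne'] using h3
    rw [intervalIntegral.integral_eq_sub_of_hasDerivAt hF
      (Continuous.intervalIntegrable (by fun_prop) c ζ₀)]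
    simp [sub_self]
    ring
  -- bound for the integral
  have hint_bound : |∫ z in c..ζ₀, k ζ₀ z * j z| ≤
      K * N * Real.exp (lam * (ζ₀ - c)) / lam := by
    have h1 : |∫ z in c..ζ₀, k ζ₀ z * j z| ≤ ∫ z in c..ζ₀, |k ζ₀ z * j z| :=
      intervalIntegral.abs_integral_le_integral_abs hc0
    have h2 : (∫ z in c..ζ₀, |k ζ₀ z * j z|) ≤
        ∫ z in c..ζ₀, K * N * Real.exp (lam * (z - c)) := by
      refine intervalIntegral.integral_mono_on hc0 hfint.abs
        (Continuous.intervalIntegrable (by fun_prop) c ζ₀) ?_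
      intro z hz
      rw [abs_mul]
      have hk1 := hkbd ζ₀ hζ₀mem z hz
      have hk2 := hjle z (hIcc_sub hz)
      calc |k ζ₀ z| * |j z| ≤ K * (N * Real.exp (lam * (z - c))) :=
            mul_le_mul hk1 hk2 (abs_nonneg _) hK0
        _ = K * N * Real.exp (lam * (z - c)) := by ring
    have h3 : (∫ z in c..ζ₀, K * N * Real.exp (lam * (z - c))) =
        K * N * ((Real.exp (lam * (ζ₀ - c)) - 1) / lam) := by
      rw [intervalIntegral.integral_const_mul, hexp_int]
    have h4 : K * N * ((Real.exp (lam * (ζ₀ - c)) - 1) / lam) ≤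
        K * N * Real.exp (lam * (ζ₀ - c)) / lam := by
      rw [mul_div_assoc]
      refine mul_le_mul_of_nonneg_left ?_ (mul_nonneg hK0 hN0)
      exact (div_le_div_iff_of_pos_right hlam_pos).2 (by linarith [Real.exp_pos (lam * (ζ₀ - c))])
    linarith [h1, h2, h3 ▸ h4]
  -- assemble the bound on |j ζ₀|
  have hj0 : |j ζ₀| ≤ κ * |j (b ζ₀)| + K * N * Real.exp (lam * (ζ₀ - c)) / lam := by
    have heq0 := heq ζ₀ hζ₀mem
    have hE1 : j ζ₀ = a ζ₀ * j (b ζ₀) - ∫ z in c..ζ₀, k ζ₀ z * j z := by linarith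
    calc |j ζ₀| = |a ζ₀ * j (b ζ₀) - ∫ z in c..ζ₀, k ζ₀ z * j z| := by rw [hE1]
      _ ≤ |a ζ₀ * j (b ζ₀)| + |∫ z in c..ζ₀, k ζ₀ z * j z| := by
          rw [sub_eq_add_neg]
          exact (abs_add_le _ _).trans (by rw [abs_neg])
      _ ≤ κ * |j (b ζ₀)| + K * N * Real.exp (lam * (ζ₀ - c)) / lam := by
          refine add_le_add ?_ hint_bound
          rw [abs_mul]
          exact mul_le_mul_of_nonneg_right (ha ζ₀ hζ₀mem) (abs_nonneg _)
  -- contraction estimate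
  have hbmem : b ζ₀ ∈ Icc c d := ⟨(hb ζ₀ hζ₀mem).1, le_trans (hb ζ₀ hζ₀mem).2 hζ₀mem.2⟩
  have hb2 : |j (b ζ₀)| * Real.exp (-(lam * (ζ₀ - c))) ≤ N := by
    have h4 := hjle (b ζ₀) hbmem
    have h5 : Real.exp (lam * (b ζ₀ - c)) * Real.exp (-(lam * (ζ₀ - c))) ≤ 1 := by
      rw [← Real.exp_add, Real.exp_le_one_iff]
      nlinarith [(hb ζ₀ hζ₀mem).2, hlam_pos]
    calc |j (b ζ₀)| * Real.exp (-(lam * (ζ₀ - c)))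
        ≤ N * Real.exp (lam * (b ζ₀ - c)) * Real.exp (-(lam * (ζ₀ - c))) :=
          mul_le_mul_of_nonneg_right h4 (Real.exp_nonneg _)
      _ = N * (Real.exp (lam * (b ζ₀ - c)) * Real.exp (-(lam * (ζ₀ - c)))) := by ring
      _ ≤ N * 1 := mul_le_mul_of_nonneg_left h5 hN0
      _ = N := mul_one N
  have hE : Real.exp (lam * (ζ₀ - c)) * Real.exp (-(lam * (ζ₀ - c))) = 1 := by
    rw [← Real.exp_add]; simp
  have key : N ≤ κ * N + K / lam * N := by
    have e2 : N ≤ (κ * |j (b ζ₀)| + K * N * Real.exp (lam * (ζ₀ - c)) / lam) *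
        Real.exp (-(lam * (ζ₀ - c))) :=
      mul_le_mul_of_nonneg_right hj0 (Real.exp_nonneg _)
    have e3 : K * N * Real.exp (lam * (ζ₀ - c)) / lam * Real.exp (-(lam * (ζ₀ - c))) =
        K / lam * N := by
      calc K * N * Real.exp (lam * (ζ₀ - c)) / lam * Real.exp (-(lam * (ζ₀ - c)))
          = K / lam * N * (Real.exp (lam * (ζ₀ - c)) * Real.exp (-(lam * (ζ₀ - c)))) := by
            ring
        _ = K / lam * N := by rw [hE, mul_one]
    calc N ≤ (κ * |j (b ζ₀)| + K * N * Real.exp (lam * (ζ₀ - c)) / lam) *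
          Real.exp (-(lam * (ζ₀ - c))) := e2
      _ = κ * (|j (b ζ₀)| * Real.exp (-(lam * (ζ₀ - c)))) +
          K * N * Real.exp (lam * (ζ₀ - c)) / lam * Real.exp (-(lam * (ζ₀ - c))) := by ring
      _ ≤ κ * N + K / lam * N := by
          rw [e3]
          exact add_le_add (mul_le_mul_of_nonneg_left hb2 hκ0) le_rfl
  have hN_eq : N = 0 := by nlinarith [key, hfac, hN0]
  intro ζ hζ
  have hle := hgle ζ hζ
  rw [hN_eq, hg_def] at hle
  have hgnn : 0 ≤ |j ζ| * Real.exp (-(lam * (ζ - c))) :=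
    mul_nonneg (abs_nonneg _) (Real.exp_nonneg _)
  have h0 : |j ζ| * Real.exp (-(lam * (ζ - c))) = 0 := le_antisymm hle hgnn
  rcases mul_eq_zero.1 h0 with h | h
  · exact abs_eq_zero.1 h
  · exact absurd h (Real.exp_ne_zero _)
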